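/- In the ICW model, the error terms R_1 := (√n/√χ_n)·(1/n)∑_i [tanh((β w_i/E[W_n])·m̃_n + h) − tanh((β w_i/E[W_n])·m̃_n^i + h)] and R̃_1 := (√n/√χ̃_n)·(1/n)∑_i w_i·[tanh((β w_i/E[W_n])·m̃_n + h) − tanh((β w_i/E[W_n])·m̃_n^i + h)] satisfy E_{μ_n}[|R_1|] ≤ (β/√χ_n)·(E[W_n²]/E[W_n])·n^{−1/2} and E_{μ_n}[|R̃_1|] ≤ (β/√χ̃_n)·(E[W_n³]/E[W_n])·n^{−1/2}. -/

import Mathlib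

open Real BigOperators Finset MeasureTheory Filter ProbabilityTheory Topology

noncomputable section

namespace ICW

/-- The real spin value associated to a Boolean: `true ↦ 1`, `false ↦ -1`. -/
def spin (b : Bool) : ℝ := if b then 1 else -1

/-- `E[W_n^k] = (1/n) ∑_i w_i^k`. -/
def EWk (n : ℕ) (w : Fin n → ℝ) (k : ℕ) : ℝ := (1 / n : ℝ) * ∑ i, (w i) ^ k

/-- `E[W_n] = (1/n) ∑_i w_i`. -/
def EW (n : ℕ) (w : Fin n → ℝ) : ℝ := (1 / n : ℝ) * ∑ i, w i

/-- The (negative) Hamiltonian of the inhomogeneous Curie–Weiss model. -/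
def ham (n : ℕ) (w : Fin n → ℝ) (β h : ℝ) (σ : Fin n → Bool) : ℝ :=
  β / (2 * ∑ i, w i) * (∑ i, w i * spin (σ i)) ^ 2 + h * ∑ i, spin (σ i)

/-- Unnormalized Boltzmann–Gibbs weight. -/
def wt (n : ℕ) (w : Fin n → ℝ) (β h : ℝ) (σ : Fin n → Bool) : ℝ :=
  Real.exp (ham n w β h σ)

/-- Partition function `Z_n`. -/
def Z (n : ℕ) (w : Fin n → ℝ) (β h : ℝ) : ℝ := ∑ σ : Fin n → Bool, wt n w β h σ

/-- Expectation under the ICW measure `μ_n`. -/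
def icwE (n : ℕ) (w : Fin n → ℝ) (β h : ℝ) (f : (Fin n → Bool) → ℝ) : ℝ :=
  (∑ σ : Fin n → Bool, wt n w β h σ * f σ) / Z n w β h

open Classical in
/-- Probability of an event under the ICW measure `μ_n`. -/
def icwP (n : ℕ) (w : Fin n → ℝ) (β h : ℝ) (A : (Fin n → Bool) → Prop) : ℝ :=
  icwE n w β h (fun σ => if A σ then 1 else 0)

/-- Magnetization `m_n`. -/
def mn (n : ℕ) (σ : Fin n → Bool) : ℝ := (1 / n : ℝ) * ∑ i, spin (σ i)

/-- Weighted magnetization `m̃_n`. -/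
def mtil (n : ℕ) (w : Fin n → ℝ) (σ : Fin n → Bool) : ℝ :=
  (1 / n : ℝ) * ∑ i, w i * spin (σ i)

/-- Weighted magnetization leaving out spin `i`, `m̃_n^i`. -/
def mtilI (n : ℕ) (w : Fin n → ℝ) (σ : Fin n → Bool) (i : Fin n) : ℝ :=
  (1 / n : ℝ) * ∑ j ∈ Finset.univ.erase i, w j * spin (σ j)

/-- Argument `√(β/E[W_n])·w_i·x + h`. -/
def arg (n : ℕ) (w : Fin n → ℝ) (β h x : ℝ) (i : Fin n) : ℝ :=
  Real.sqrt (β / EW n w) * w i * x + h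

/-- `G_n(x)`. -/
def Gfun (n : ℕ) (w : Fin n → ℝ) (β h : ℝ) (x : ℝ) : ℝ :=
  x ^ 2 / 2 - (1 / n : ℝ) * ∑ i, Real.log (Real.cosh (arg n w β h x i))

/-- `G_n(x; s)` (with tilted argument `x+s`). -/
def GfunS (n : ℕ) (w : Fin n → ℝ) (β h : ℝ) (x s : ℝ) : ℝ :=
  x ^ 2 / 2 - (1 / n : ℝ) * ∑ i, Real.log (Real.cosh (arg n w β h (x + s) i))

/-- `G_n'(x)`. -/
def Gfun' (n : ℕ) (w : Fin n → ℝ) (β h : ℝ) (x : ℝ) : ℝ :=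
  x - (1 / n : ℝ) * ∑ i, Real.sqrt (β / EW n w) * w i * Real.tanh (arg n w β h x i)

/-- `G_n''(x)`. -/
def Gfun'' (n : ℕ) (w : Fin n → ℝ) (β h : ℝ) (x : ℝ) : ℝ :=
  1 - β / EW n w * ((1 / n : ℝ) * ∑ i, (1 - Real.tanh (arg n w β h x i) ^ 2) * (w i) ^ 2)

/-- `x` has the same sign as `h` (and is `0` when `h = 0`). -/
def SameSign (h x : ℝ) : Prop :=
  (0 < h ∧ 0 < x) ∨ (h < 0 ∧ x < 0) ∨ (h = 0 ∧ x = 0)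

/-- `M_n`, defined from a solution `x` of the fixed point equation. -/
def Mn (n : ℕ) (w : Fin n → ℝ) (β h x : ℝ) : ℝ :=
  (1 / n : ℝ) * ∑ i, Real.tanh (arg n w β h x i)

/-- The susceptibility `χ_n`, defined from a solution `x` of the fixed point equation. -/
def chiN (n : ℕ) (w : Fin n → ℝ) (β h x : ℝ) : ℝ :=
  1 - (1 / n : ℝ) * ∑ i, Real.tanh (arg n w β h x i) ^ 2
    + β / EW n w * ((1 / n : ℝ) * ∑ i, (1 - Real.tanh (arg n w β h x i) ^ 2) * w i) ^ 2
      / Gfun'' n w β h x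

/-- `M̃_n`. -/
def Mtil (n : ℕ) (w : Fin n → ℝ) (β x : ℝ) : ℝ := Real.sqrt (EW n w / β) * x

/-- `χ̃_n`. -/
def chiTil (n : ℕ) (w : Fin n → ℝ) (β h x : ℝ) : ℝ :=
  ((1 / n : ℝ) * ∑ i, (1 - Real.tanh (arg n w β h x i) ^ 2) * (w i) ^ 2) / Gfun'' n w β h x

/-- The normalized magnetization `X_n` (as a function of the configuration),
where `x` is the relevant solution of the fixed point equation. -/
def Xn (n : ℕ) (w : Fin n → ℝ) (β h x : ℝ) (σ : Fin n → Bool) : ℝ :=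
  Real.sqrt n * (mn n σ - Mn n w β h x) / Real.sqrt (chiN n w β h x)

/-- The normalized weighted magnetization `X̃_n`. -/
def Xtil (n : ℕ) (w : Fin n → ℝ) (β h x : ℝ) (σ : Fin n → Bool) : ℝ :=
  Real.sqrt n * (mtil n w σ - Mtil n w β x) / Real.sqrt (chiTil n w β h x)

/-- The standard normal cumulative distribution function. -/
def stdGaussCDF (z : ℝ) : ℝ := ((gaussianReal 0 1) (Set.Iic z)).toReal

/-- Kolmogorov distance between the law of `X` under `μ_n` and the standard normal law. -/
def dK (n : ℕ) (w : Fin n → ℝ) (β h : ℝ) (X : (Fin n → Bool) → ℝ) : ℝ :=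
  ⨆ z : ℝ, |icwP n w β h (fun σ => X σ ≤ z) - stdGaussCDF z|

/-- Weight regularity condition (i): the empirical weight distribution converges weakly to
the law `ν` of `W`, which is a probability measure with `E[W] > 0`. -/
def WeightRegI (w : (n : ℕ) → Fin n → ℝ) (ν : Measure ℝ) : Prop :=
  (∀ n i, 0 < w n i) ∧ IsProbabilityMeasure ν ∧
    (∀ f : BoundedContinuousFunction ℝ ℝ,
      Tendsto (fun n : ℕ => (1 / n : ℝ) * ∑ i, f (w n i)) atTop (𝓝 (∫ x, f x ∂ν))) ∧
    Integrable (fun x => x) ν ∧ 0 < ∫ x, x ∂ν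

/-- Weight regularity condition (ii): `E[W_n²] → E[W²] < ∞`. -/
def WeightRegII (w : (n : ℕ) → Fin n → ℝ) (ν : Measure ℝ) : Prop :=
  Integrable (fun x => x ^ 2) ν ∧
    Tendsto (fun n => EWk n (w n) 2) atTop (𝓝 (∫ x, x ^ 2 ∂ν))

/-- Weight regularity condition (iii): `E[W_n³] → E[W³] < ∞`. -/
def WeightRegIII (w : (n : ℕ) → Fin n → ℝ) (ν : Measure ℝ) : Prop :=
  Integrable (fun x => x ^ 3) ν ∧
    Tendsto (fun n => EWk n (w n) 3) atTop (𝓝 (∫ x, x ^ 3 ∂ν))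

/-- The critical inverse temperature `β_c = E[W]/E[W²]`. -/
def betaC (ν : Measure ℝ) : ℝ := (∫ x, x ∂ν) / (∫ x, x ^ 2 ∂ν)

/-- The uniqueness regime `U`. -/
def Uniq (ν : Measure ℝ) (β h : ℝ) : Prop :=
  (0 ≤ β ∧ h ≠ 0) ∨ (0 < β ∧ β < betaC ν ∧ h = 0)

/-- Probability that spin `i` equals `+1` given the remaining spins. -/
def pPlus (n : ℕ) (w : Fin n → ℝ) (β h : ℝ) (σ : Fin n → Bool) (i : Fin n) : ℝ :=
  wt n w β h (Function.update σ i true) /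
    (wt n w β h (Function.update σ i true) + wt n w β h (Function.update σ i false))

/-- Conditional expectation given `F_n` (the σ-algebra generated by `σ`) of a function of
`(σ, I, σ'_I)`, where `I` is uniform on `[n]` and `σ'_I` is resampled from the conditional
distribution of the `I`-th spin given the others. -/
def condAvg (n : ℕ) (w : Fin n → ℝ) (β h : ℝ)
    (f : (Fin n → Bool) → Fin n → Bool → ℝ) (σ : Fin n → Bool) : ℝ :=
  (1 / n : ℝ) * ∑ i, (pPlus n w β h σ i * f σ i true + (1 - pPlus n w β h σ i) * f σ i false)

/-- The increment `X_n − X'_n` as a function of `(σ, I, σ'_I)`. -/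
def XnD (n : ℕ) (w : Fin n → ℝ) (β h x : ℝ) (σ : Fin n → Bool) (i : Fin n) (b : Bool) : ℝ :=
  (spin (σ i) - spin b) / (Real.sqrt n * Real.sqrt (chiN n w β h x))

/-- The increment `X̃_n − X̃'_n` as a function of `(σ, I, σ'_I)`. -/
def XtilD (n : ℕ) (w : Fin n → ℝ) (β h x : ℝ) (σ : Fin n → Bool) (i : Fin n) (b : Bool) : ℝ :=
  w i * (spin (σ i) - spin b) / (Real.sqrt n * Real.sqrt (chiTil n w β h x))

/-- The constant `c` in the regression equation. -/
def cconst (n : ℕ) (w : Fin n → ℝ) (β h x : ℝ) : ℝ :=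
  Real.sqrt (chiTil n w β h x) / Real.sqrt (chiN n w β h x) * (β / EW n w) *
    ((1 / n : ℝ) * ∑ i, (1 - Real.tanh (arg n w β h x i) ^ 2) * w i)

end ICW

namespace ICW

/-- `tanh` has derivative `1 / cosh x ^ 2`. -/
lemma hasDerivAt_tanh (x : ℝ) : HasDerivAt Real.tanh (1 / Real.cosh x ^ 2) x := by
  have h := (Real.hasDerivAt_sinh x).div (Real.hasDerivAt_cosh x) (ne_of_gt (Real.cosh_pos x))
  have heq : (Real.cosh x * Real.cosh x - Real.sinh x * Real.sinh x) / Real.cosh x ^ 2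
      = 1 / Real.cosh x ^ 2 := by
    rw [show Real.cosh x * Real.cosh x - Real.sinh x * Real.sinh x
      = Real.cosh x ^ 2 - Real.sinh x ^ 2 by ring, Real.cosh_sq_sub_sinh_sq]
  rw [heq] at h
  have : (fun y => Real.sinh y / Real.cosh y) = Real.tanh := by
    funext y; rw [Real.tanh_eq_sinh_div_cosh]
  rwa [show (Real.sinh / Real.cosh) = Real.tanh from this] at h

/-- `tanh` is 1-Lipschitz. -/
lemma abs_tanh_sub_tanh_le (a b : ℝ) : |Real.tanh a - Real.tanh b| ≤ |a - b| := by
  have L : LipschitzWith 1 Real.tanh := by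
    refine lipschitzWith_of_nnnorm_deriv_le
      (fun y => (hasDerivAt_tanh y).differentiableAt) (fun y => ?_)
    rw [(hasDerivAt_tanh y).deriv]
    have h1 : (1:ℝ) ≤ Real.cosh y ^ 2 := by nlinarith [Real.one_le_cosh y]
    have h2 : ‖(1:ℝ) / Real.cosh y ^ 2‖ ≤ (1:ℝ) := by
      rw [Real.norm_eq_abs, abs_of_nonneg (by positivity)]
      rw [div_le_one (by positivity)]; exact h1
    exact_mod_cast (by exact_mod_cast h2 : (‖(1:ℝ) / Real.cosh y ^ 2‖₊ : ℝ) ≤ ((1:NNReal):ℝ))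
  have := L.dist_le_mul a b
  simpa [Real.dist_eq] using this

lemma abs_spin (b : Bool) : |spin b| = 1 := by cases b <;> simp [spin]

lemma EW_pos {n : ℕ} (hn : 0 < n) {w : Fin n → ℝ} (hw : ∀ i, 0 < w i) : 0 < EW n w := by
  unfold EW
  have : (0:ℝ) < ∑ i, w i :=
    Finset.sum_pos (fun i _ => hw i) (Finset.univ_nonempty_iff.2 ⟨⟨0, hn⟩⟩)
  positivity

lemma mtil_sub_mtilI (n : ℕ) (w : Fin n → ℝ) (σ : Fin n → Bool) (i : Fin n) :
    mtil n w σ - mtilI n w σ i = (1 / n : ℝ) * (w i * spin (σ i)) := by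
  unfold mtil mtilI
  rw [← Finset.add_sum_erase Finset.univ (fun j => w j * spin (σ j)) (Finset.mem_univ i)]
  ring

/-- Key pointwise bound on the weighted sum of tanh differences. -/
lemma key_sum_bound (n : ℕ) (hn : 0 < n) (w : Fin n → ℝ) (hw : ∀ i, 0 < w i) (β h : ℝ)
    (hβ : 0 < β) (σ : Fin n → Bool) (c : Fin n → ℝ) (hc : ∀ i, 0 ≤ c i) :
    |∑ i, c i * (Real.tanh (β * w i / EW n w * mtil n w σ + h)
      - Real.tanh (β * w i / EW n w * mtilI n w σ i + h))|
    ≤ ∑ i, c i * (β * (w i) ^ 2 / (n * EW n w)) := by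
  have hEW := EW_pos hn hw
  refine (Finset.abs_sum_le_sum_abs _ _).trans (Finset.sum_le_sum fun i _ => ?_)
  rw [abs_mul, abs_of_nonneg (hc i)]
  refine mul_le_mul_of_nonneg_left ?_ (hc i)
  refine (abs_tanh_sub_tanh_le _ _).trans_eq ?_
  have hd : (β * w i / EW n w * mtil n w σ + h) - (β * w i / EW n w * mtilI n w σ i + h)
      = β * w i / EW n w * ((1 / n : ℝ) * (w i * spin (σ i))) := by
    rw [← mtil_sub_mtilI]; ring
  rw [hd]
  rw [show β * w i / EW n w * ((1 / n : ℝ) * (w i * spin (σ i)))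
      = (β * w i ^ 2 / (n * EW n w)) * spin (σ i) by field_simp]
  rw [abs_mul, abs_spin, mul_one, abs_of_nonneg]
  have := (hw i); positivity

/-- Expectation under `μ_n` of a pointwise bounded function is bounded. -/
lemma icwE_le_of_le (n : ℕ) (w : Fin n → ℝ) (β h : ℝ) (f : (Fin n → Bool) → ℝ) (c : ℝ)
    (hf : ∀ σ, f σ ≤ c) : icwE n w β h f ≤ c := by
  unfold icwE
  have hZ : 0 < Z n w β h :=
    Finset.sum_pos (fun σ _ => Real.exp_pos _) Finset.univ_nonempty
  rw [div_le_iff₀ hZ]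
  calc ∑ σ : Fin n → Bool, wt n w β h σ * f σ
      ≤ ∑ σ : Fin n → Bool, wt n w β h σ * c :=
        Finset.sum_le_sum fun σ _ => mul_le_mul_of_nonneg_left (hf σ) (Real.exp_pos _).le
    _ = c * Z n w β h := by rw [Z, ← Finset.sum_mul, mul_comm]


/-- Error term `R_1`. -/
def R1 (n : ℕ) (w : Fin n → ℝ) (β h x : ℝ) (σ : Fin n → Bool) : ℝ :=
  Real.sqrt n / Real.sqrt (chiN n w β h x) *
    ((1 / n : ℝ) * ∑ i, (Real.tanh (β * w i / EW n w * mtil n w σ + h)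
      - Real.tanh (β * w i / EW n w * mtilI n w σ i + h)))

/-- Error term `R̃_1`. -/
def Rtil1 (n : ℕ) (w : Fin n → ℝ) (β h x : ℝ) (σ : Fin n → Bool) : ℝ :=
  Real.sqrt n / Real.sqrt (chiTil n w β h x) *
    ((1 / n : ℝ) * ∑ i, w i * (Real.tanh (β * w i / EW n w * mtil n w σ + h)
      - Real.tanh (β * w i / EW n w * mtilI n w σ i + h)))

/-- **Bounds on the error terms `R_1` and `R̃_1`**:
`E[|R_1|] ≤ (β/√χ_n)·(E[W_n²]/E[W_n])·n^{−1/2}` and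
`E[|R̃_1|] ≤ (β/√χ̃_n)·(E[W_n³]/E[W_n])·n^{−1/2}`. -/
theorem R1_bounds (n : ℕ) (hn : 0 < n) (w : Fin n → ℝ) (hw : ∀ i, 0 < w i)
    (β h : ℝ) (hβ : 0 < β) (x : ℝ) (hx : Gfun' n w β h x = 0) (hsign : SameSign h x)
    (hG'' : 0 < Gfun'' n w β h x) :
    icwE n w β h (fun σ => |R1 n w β h x σ|)
        ≤ β / Real.sqrt (chiN n w β h x) * (EWk n w 2 / EW n w) / Real.sqrt n ∧
    icwE n w β h (fun σ => |Rtil1 n w β h x σ|)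
        ≤ β / Real.sqrt (chiTil n w β h x) * (EWk n w 3 / EW n w) / Real.sqrt n := by
  have hEW := EW_pos hn hw
  have hn' : (0:ℝ) < n := Nat.cast_pos.2 hn
  have hsq : Real.sqrt n * Real.sqrt n = (n:ℝ) := Real.mul_self_sqrt hn'.le
  have hsn : (0:ℝ) < Real.sqrt n := Real.sqrt_pos.2 hn'
  constructor
  · refine icwE_le_of_le _ _ _ _ _ _ (fun σ => ?_)
    have hk := key_sum_bound n hn w hw β h hβ σ (fun _ => 1) (fun _ => zero_le_one)
    simp only [one_mul] at hk
    have h1 : |R1 n w β h x σ| ≤ Real.sqrt n / Real.sqrt (chiN n w β h x)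
        * ((1 / n : ℝ) * ∑ i, (β * (w i) ^ 2 / (n * EW n w))) := by
      rw [R1, abs_mul, abs_of_nonneg (by positivity :
        (0:ℝ) ≤ Real.sqrt n / Real.sqrt (chiN n w β h x))]
      refine mul_le_mul_of_nonneg_left ?_ (by positivity)
      rw [abs_mul, abs_of_nonneg (by positivity : (0:ℝ) ≤ (1 / n : ℝ))]
      exact mul_le_mul_of_nonneg_left hk (by positivity)
    refine h1.trans ?_
    have hsum : (1 / n : ℝ) * ∑ i, (β * (w i) ^ 2 / (n * EW n w))
        = β * EWk n w 2 / (n * EW n w) := by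
      rw [EWk]
      rw [show (∑ i, β * (w i) ^ 2 / (n * EW n w)) = (∑ i, (w i) ^ 2) * (β / (n * EW n w)) by
        rw [Finset.sum_mul]; exact Finset.sum_congr rfl fun i _ => by ring]
      field_simp
    rw [hsum, show ((n:ℝ) * EW n w) = Real.sqrt n * (Real.sqrt n * EW n w) from by
      linear_combination (-(EW n w)) * hsq]
    rcases eq_or_lt_of_le (Real.sqrt_nonneg (chiN n w β h x)) with hchi | hchi
    · rw [← hchi]; simp
    · apply le_of_eq
      field_simp
  · refine icwE_le_of_le _ _ _ _ _ _ (fun σ => ?_)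
    have hk := key_sum_bound n hn w hw β h hβ σ (fun i => w i) (fun i => (hw i).le)
    have h1 : |Rtil1 n w β h x σ| ≤ Real.sqrt n / Real.sqrt (chiTil n w β h x)
        * ((1 / n : ℝ) * ∑ i, w i * (β * (w i) ^ 2 / (n * EW n w))) := by
      rw [Rtil1, abs_mul, abs_of_nonneg (by positivity :
        (0:ℝ) ≤ Real.sqrt n / Real.sqrt (chiTil n w β h x))]
      refine mul_le_mul_of_nonneg_left ?_ (by positivity)
      rw [abs_mul, abs_of_nonneg (by positivity : (0:ℝ) ≤ (1 / n : ℝ))]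
      exact mul_le_mul_of_nonneg_left hk (by positivity)
    refine h1.trans ?_
    have hsum : (1 / n : ℝ) * ∑ i, w i * (β * (w i) ^ 2 / (n * EW n w))
        = β * EWk n w 3 / (n * EW n w) := by
      rw [EWk]
      rw [show (∑ i, w i * (β * (w i) ^ 2 / (n * EW n w)))
          = (∑ i, (w i) ^ 3) * (β / (n * EW n w)) by
        rw [Finset.sum_mul]; exact Finset.sum_congr rfl fun i _ => by ring]
      field_simp
    rw [hsum, show ((n:ℝ) * EW n w) = Real.sqrt n * (Real.sqrt n * EW n w) from by
      linear_combination (-(EW n w)) * hsq]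
    rcases eq_or_lt_of_le (Real.sqrt_nonneg (chiTil n w β h x)) with hchi | hchi
    · rw [← hchi]; simp
    · apply le_of_eq
      field_simp


end ICW
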